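/- Let X be a homogeneous space with a regular G_δ-diagonal. Then |X| ≤ wL(X)^{πχ(X)}. -/

import Mathlib

open Set Topology

universe u

namespace DiagonalPaper

/-- The star of a set `A` with respect to a family `𝒰`:
the union of all members of `𝒰` meeting `A`. -/
def st {X : Type u} (A : Set X) (𝒰 : Set (Set X)) : Set X :=
  ⋃₀ {U | U ∈ 𝒰 ∧ (U ∩ A).Nonempty}

/-- Iterated star `Stⁿ(A, 𝒰)`. -/
def stn {X : Type u} (n : ℕ) (A : Set X) (𝒰 : Set (Set X)) : Set X :=
  (fun B => st B 𝒰)^[n] A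

/-- `𝒰` is an open cover of the space `X`. -/
def IsOpenCover {X : Type u} [TopologicalSpace X] (𝒰 : Set (Set X)) : Prop :=
  (∀ U ∈ 𝒰, IsOpen U) ∧ ⋃₀ 𝒰 = Set.univ

/-- The weak Lindelöf number of `X` (by convention at least `ℵ₀`): the least `κ` such that
every open cover has a subfamily of size at most `κ` with dense union. -/
noncomputable def weakLindelof (X : Type u) [TopologicalSpace X] : Cardinal.{u} :=
  Cardinal.aleph0 ⊔ sInf {κ | ∀ 𝒰 : Set (Set X), IsOpenCover 𝒰 →
    ∃ 𝒱 ⊆ 𝒰, Cardinal.mk ↥𝒱 ≤ κ ∧ Dense (⋃₀ 𝒱)}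

/-- `B` is a local π-base at `x`: a family of nonempty open sets such that
every open neighbourhood of `x` contains a member of `B`. -/
def IsPiBaseAt {X : Type u} [TopologicalSpace X] (x : X) (B : Set (Set X)) : Prop :=
  (∀ V ∈ B, IsOpen V ∧ V.Nonempty) ∧
    ∀ U : Set X, IsOpen U → x ∈ U → ∃ V ∈ B, V ⊆ U

/-- The π-character of `X` (by convention at least `ℵ₀`): the supremum over `x ∈ X` of the
least cardinality of a local π-base at `x`. -/
noncomputable def piCharacter (X : Type u) [TopologicalSpace X] : Cardinal.{u} :=
  Cardinal.aleph0 ⊔ ⨆ x : X, sInf {κ | ∃ B : Set (Set X), IsPiBaseAt x B ∧ Cardinal.mk ↥B ≤ κ}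

/-- `X` has a regular `G_δ`-diagonal: the diagonal is the intersection of countably many
open sets `U_n` of `X²` as well as of their closures. -/
def HasRegularGDeltaDiagonal (X : Type u) [TopologicalSpace X] : Prop :=
  ∃ U : ℕ → Set (X × X), (∀ n, IsOpen (U n)) ∧
    Set.diagonal X = ⋂ n, U n ∧ Set.diagonal X = ⋂ n, closure (U n)

/-- if `X` is homogeneous and has a regular `G_δ`-diagonal, then
`|X| ≤ wL(X)^{πχ(X)}`. -/
theorem card_le_weakLindelof_pow_piCharacter_of_homogeneous
    (X : Type u) [TopologicalSpace X]
    (hhom : ∀ x y : X, ∃ h : X ≃ₜ X, h x = y)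
    (hd : HasRegularGDeltaDiagonal X) :
    Cardinal.mk X ≤ weakLindelof X ^ piCharacter X := by
  classical
  rcases isEmpty_or_nonempty X with hX | hX
  · rw [Cardinal.mk_eq_zero]; exact zero_le
  obtain ⟨U, hUopen, hUdiag, hUcl⟩ := hd
  have hlam0 : Cardinal.aleph0 ≤ weakLindelof X := le_sup_left
  have hpii0 : Cardinal.aleph0 ≤ piCharacter X := le_sup_left
  -- weak Lindelöf property holds at `weakLindelof X`
  have hwL : ∀ 𝒰 : Set (Set X), IsOpenCover 𝒰 →
      ∃ 𝒱 ⊆ 𝒰, Cardinal.mk ↥𝒱 ≤ weakLindelof X ∧ Dense (⋃₀ 𝒱) := by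
    have hmem : Cardinal.mk (Set X) ∈ {κ | ∀ 𝒰 : Set (Set X), IsOpenCover 𝒰 →
        ∃ 𝒱 ⊆ 𝒰, Cardinal.mk ↥𝒱 ≤ κ ∧ Dense (⋃₀ 𝒱)} := by
      intro 𝒰 h𝒰
      exact ⟨𝒰, subset_rfl, Cardinal.mk_set_le _, by rw [h𝒰.2]; exact dense_univ⟩
    have hin := csInf_mem ⟨_, hmem⟩
    intro 𝒰 h𝒰
    obtain ⟨𝒱, h1, h2, h3⟩ := hin 𝒰 h𝒰
    exact ⟨𝒱, h1, h2.trans le_sup_right, h3⟩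
  obtain ⟨p⟩ := hX
  -- π-base at p of size ≤ piCharacter X
  have hpi : ∃ 𝔅 : Set (Set X), IsPiBaseAt p 𝔅 ∧ Cardinal.mk ↥𝔅 ≤ piCharacter X := by
    have hmem : Cardinal.mk (Set X) ∈
        {κ | ∃ B : Set (Set X), IsPiBaseAt p B ∧ Cardinal.mk ↥B ≤ κ} :=
      ⟨{V | IsOpen V ∧ V.Nonempty},
        ⟨fun V hV => hV, fun W hW hpW => ⟨W, ⟨hW, ⟨p, hpW⟩⟩, subset_rfl⟩⟩,
        Cardinal.mk_set_le _⟩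
    have hin := csInf_mem ⟨_, hmem⟩
    obtain ⟨𝔅, h1, h2⟩ := hin
    refine ⟨𝔅, h1, h2.trans (le_trans ?_ le_sup_right)⟩
    exact le_ciSup (Cardinal.bddAbove_range _) p
  obtain ⟨𝔅, h𝔅, h𝔅card⟩ := hpi
  -- the covers 𝒞 n
  set 𝒞 : ℕ → Set (Set X) := fun n => {V | IsOpen V ∧ V ×ˢ V ⊆ U n} with h𝒞
  have h𝒞cov : ∀ n, IsOpenCover (𝒞 n) := by
    intro n
    refine ⟨fun V hV => hV.1, ?_⟩
    ext z
    simp only [mem_sUnion, mem_univ, iff_true]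
    have hz : (z, z) ∈ U n := by
      have hzd : (z, z) ∈ Set.diagonal X := rfl
      rw [hUdiag] at hzd
      exact mem_iInter.mp hzd n
    obtain ⟨A, B, hA, hB, hzA, hzB, hAB⟩ := isOpen_prod_iff.mp (hUopen n) z z hz
    exact ⟨A ∩ B, ⟨hA.inter hB, fun q hq => hAB ⟨hq.1.1, hq.2.2⟩⟩, hzA, hzB⟩
  have h𝒱 : ∀ n, ∃ 𝒱 ⊆ 𝒞 n, Cardinal.mk ↥𝒱 ≤ weakLindelof X ∧ Dense (⋃₀ 𝒱) :=
    fun n => hwL _ (h𝒞cov n)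
  choose 𝒱 h𝒱sub h𝒱card h𝒱dense using h𝒱
  -- homeomorphisms
  choose hom hhp using fun x : X => hhom p x
  -- the coding
  have key : ∀ (x : X) (q : ℕ × ↥𝔅),
      ∃ V, V ∈ 𝒱 q.1 ∧ (V ∩ (hom x '' (q.2 : Set X))).Nonempty := by
    intro x q
    have hprop := h𝔅.1 _ q.2.2
    have himgopen : IsOpen (hom x '' (q.2 : Set X)) := ((hom x).isOpen_image).mpr hprop.1
    have himgne : (hom x '' (q.2 : Set X)).Nonempty := hprop.2.image _
    obtain ⟨z, hz1, hz2⟩ := (h𝒱dense q.1).inter_open_nonempty _ himgopen himgne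
    obtain ⟨V, hV, hzV⟩ := hz2
    exact ⟨V, hV, ⟨z, hzV, hz1⟩⟩
  choose F hF1 hF2 using key
  have hinj : Function.Injective (fun x : X => fun q : ℕ × ↥𝔅 => (⟨F x q, hF1 x q⟩ : ↥(𝒱 q.1))) := by
    intro x y hxy
    by_contra hne
    have hdne : (x, y) ∉ Set.diagonal X := hne
    rw [hUcl, mem_iInter] at hdne
    push_neg at hdne
    obtain ⟨n, hn⟩ := hdne
    obtain ⟨A, B2, hA, hB2, hxA, hyB2, hsub⟩ :=
      isOpen_prod_iff.mp (isClosed_closure (s := U n)).isOpen_compl x y hn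
    have hABU : ∀ q : X × X, q ∈ A ×ˢ B2 → q ∉ U n := by
      intro q hq hqU
      exact hsub hq (subset_closure hqU)
    set g : X ≃ₜ X := (hom x).symm.trans (hom y) with hg
    have hgx : g x = y := by
      have hsx : (hom x).symm x = p := by
        apply (hom x).injective
        rw [Homeomorph.apply_symm_apply, hhp]
      simp [hg, hsx, hhp y]
    have hA' : IsOpen (A ∩ g ⁻¹' B2) := hA.inter (hB2.preimage g.continuous)
    have hxA' : x ∈ A ∩ g ⁻¹' B2 := ⟨hxA, by rw [mem_preimage, hgx]; exact hyB2⟩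
    have hpreopen : IsOpen ((hom x) ⁻¹' (A ∩ g ⁻¹' B2)) := hA'.preimage (hom x).continuous
    have hppre : p ∈ (hom x) ⁻¹' (A ∩ g ⁻¹' B2) := by
      rw [mem_preimage, hhp]; exact hxA'
    obtain ⟨β, hβ𝔅, hβsub⟩ := h𝔅.2 _ hpreopen hppre
    set q : ℕ × ↥𝔅 := (n, ⟨β, hβ𝔅⟩) with hq
    have himgsub : hom x '' β ⊆ A ∩ g ⁻¹' B2 := image_subset_iff.mpr hβsub
    have heq : F x q = F y q := by
      exact Subtype.ext_iff.mp (congrFun hxy q)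
    obtain ⟨a, haV, haimg⟩ := hF2 x q
    have hyne : ((F x q) ∩ (hom y '' (q.2 : Set X))).Nonempty := by
      rw [heq]; exact hF2 y q
    obtain ⟨b, hbV, hbimg⟩ := hyne
    have haA : a ∈ A := (himgsub haimg).1
    have hbB2 : b ∈ B2 := by
      have himg2 : hom y '' (q.2 : Set X) = g '' (hom x '' (q.2 : Set X)) := by
        rw [← image_comp]
        apply image_congr
        intro t _
        simp [hg]
      rw [himg2] at hbimg
      obtain ⟨c, hc, hcb⟩ := hbimg
      have hc2 : c ∈ A ∩ g ⁻¹' B2 := himgsub hc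
      rw [← hcb]
      exact hc2.2
    have hVC : (F x q) ×ˢ (F x q) ⊆ U n := (h𝒱sub n (hF1 x q)).2
    exact hABU (a, b) ⟨haA, hbB2⟩ (hVC ⟨haV, hbV⟩)
  -- counting
  have hexp : Cardinal.mk (ℕ × ↥𝔅) ≤ piCharacter X := by
    have h1 : Cardinal.mk (ℕ × ↥𝔅) ≤ Cardinal.aleph0 * Cardinal.mk ↥𝔅 := by
      simp [Cardinal.mk_prod]
    refine h1.trans ?_
    calc Cardinal.aleph0 * Cardinal.mk ↥𝔅 ≤ piCharacter X * piCharacter X :=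
          mul_le_mul' hpii0 h𝔅card
      _ = piCharacter X := Cardinal.mul_eq_self hpii0
  calc Cardinal.mk X
      ≤ Cardinal.mk (∀ q : ℕ × ↥𝔅, ↥(𝒱 q.1)) := Cardinal.mk_le_of_injective hinj
    _ = Cardinal.prod (fun q : ℕ × ↥𝔅 => Cardinal.mk ↥(𝒱 q.1)) := Cardinal.mk_pi _
    _ ≤ Cardinal.prod (fun _ : ℕ × ↥𝔅 => weakLindelof X) :=
        Cardinal.prod_le_prod _ _ (fun q => h𝒱card q.1)
    _ = weakLindelof X ^ Cardinal.mk (ℕ × ↥𝔅) := Cardinal.prod_const' _ _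
    _ ≤ weakLindelof X ^ piCharacter X := by
        apply Cardinal.power_le_power_left ?_ hexp
        intro h
        rw [h] at hlam0
        exact Cardinal.aleph0_ne_zero (le_antisymm hlam0 zero_le)

end DiagonalPaper
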